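/- For each ε > 0 define w₁^ε(t) = ε⁻¹ ∫_0^t v(τ/ε²) sin(τ/ε²) dτ and w₂^ε(t) = ε⁻¹ ∫_0^t v(τ/ε²) cos(τ/ε²) dτ. For every T > 0 there exists a constant C > 0 such that for every ε ∈ (0,1], every s, t ∈ [0,T] and every i ∈ {1,2}: E[(w_i^ε(t) − w_i^ε(s))²] ≤ C|t−s|^{1−γ} if γ ∈ (0,1), and E[(w_i^ε(t) − w_i^ε(s))²] ≤ C|t−s|^{2−γ} if γ ∈ [1,2). -/

import Mathlib

open MeasureTheory Filter Topology

open Set ProbabilityTheory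

set_option maxHeartbeats 1000000

lemma osc_aux (f : ℝ → ℝ) : ∀ n : ℕ, ∀ a b : ℝ, a ≤ b → b ≤ a + 2 * Real.pi * n →
    AntitoneOn f (Icc a b) → 0 ≤ f b →
    |∫ u in a..b, f u * Real.cos u| ≤ 4 * Real.pi * f a := by
  intro n
  induction n with
  | zero =>
    intro a b hab hb hanti hfb
    have : b ≤ a := by simpa using hb
    have hba : b = a := le_antisymm this hab
    subst hba
    simp only [intervalIntegral.integral_same, abs_zero]
    positivity
  | succ n ih =>
    intro a b hab hb hanti hfb
    have hpi := Real.pi_pos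
    have hfa_nonneg : 0 ≤ f a := le_trans hfb (hanti ⟨le_refl a, hab⟩ ⟨hab, le_refl b⟩ hab)
    have hint : ∀ c d, a ≤ c → c ≤ d → d ≤ b →
        IntervalIntegrable (fun u => f u * Real.cos u) volume c d := by
      intro c d hac hcd hdb
      have h1 : AntitoneOn f (uIcc c d) := by
        apply hanti.mono
        rw [uIcc_of_le hcd]
        exact Icc_subset_Icc hac hdb
      exact (h1.intervalIntegrable).mul_continuousOn Real.continuous_cos.continuousOn
    by_cases hsmall : b ≤ a + 2 * Real.pi
    · have h0 : ∀ x ∈ Set.uIoc a b, ‖f x * Real.cos x‖ ≤ f a := by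
        intro x hx
        rw [uIoc_of_le hab] at hx
        have hx' : x ∈ Icc a b := ⟨le_of_lt hx.1, hx.2⟩
        have h1 : |f x| ≤ f a := by
          rw [abs_of_nonneg (le_trans hfb (hanti hx' ⟨hab, le_refl b⟩ hx.2))]
          exact hanti ⟨le_refl a, hab⟩ hx' hx'.1
        calc ‖f x * Real.cos x‖ = |f x| * |Real.cos x| := abs_mul _ _
          _ ≤ f a * 1 := mul_le_mul h1 (Real.abs_cos_le_one x) (abs_nonneg _) hfa_nonneg
          _ = f a := mul_one _
      have h2 := intervalIntegral.norm_integral_le_of_norm_le_const h0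
      rw [Real.norm_eq_abs] at h2
      apply le_trans h2
      rw [abs_of_nonneg (by linarith)]
      nlinarith
    · push_neg at hsmall
      have hac : a ≤ a + 2 * Real.pi := by linarith
      have hcb : a + 2 * Real.pi ≤ b := le_of_lt hsmall
      have hcmem : a + 2 * Real.pi ∈ Icc a b := ⟨hac, hcb⟩
      have hsplit : (∫ u in a..b, f u * Real.cos u) =
          (∫ u in a..(a + 2*Real.pi), f u * Real.cos u)
            + ∫ u in (a + 2*Real.pi)..b, f u * Real.cos u := by
        rw [intervalIntegral.integral_add_adjacent_intervals
          (hint a _ (le_refl a) hac hcb) (hint _ b hac hcb (le_refl b))]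
      have hanti' : AntitoneOn f (Icc (a + 2*Real.pi) b) :=
        hanti.mono (Icc_subset_Icc hac (le_refl b))
      have htail : |∫ u in (a + 2*Real.pi)..b, f u * Real.cos u| ≤ 4 * Real.pi * f (a + 2*Real.pi) := by
        apply ih _ b hcb _ hanti' hfb
        push_cast at hb ⊢
        linarith
      have hfc_le : f (a + 2*Real.pi) ≤ f a := hanti ⟨le_refl a, hab⟩ hcmem hac
      have hcos0 : (∫ u in a..(a + 2*Real.pi), Real.cos u) = 0 := by
        simp [Real.sin_add_two_pi]
      have hhead : |∫ u in a..(a + 2*Real.pi), f u * Real.cos u| ≤ 2 * Real.pi * (f a - f (a + 2*Real.pi)) := by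
        have hii1 : IntervalIntegrable (fun u => f u * Real.cos u) volume a (a + 2*Real.pi) :=
          hint a (a + 2*Real.pi) (le_refl a) hac hcb
        have hii2 : IntervalIntegrable (fun u => f (a + 2*Real.pi) * Real.cos u) volume a (a + 2*Real.pi) :=
          intervalIntegrable_const.mul_continuousOn Real.continuous_cos.continuousOn
        have hrw : (∫ u in a..(a + 2*Real.pi), (f u - f (a + 2*Real.pi)) * Real.cos u)
            = ∫ u in a..(a + 2*Real.pi), f u * Real.cos u := by
          have e1 : (∫ u in a..(a + 2*Real.pi), (f u - f (a + 2*Real.pi)) * Real.cos u)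
              = (∫ u in a..(a + 2*Real.pi), f u * Real.cos u)
                - ∫ u in a..(a + 2*Real.pi), f (a + 2*Real.pi) * Real.cos u := by
            rw [← intervalIntegral.integral_sub hii1 hii2]
            congr 1; funext u; ring
          have e2 : (∫ u in a..(a + 2*Real.pi), f (a + 2*Real.pi) * Real.cos u)
              = f (a + 2*Real.pi) * ∫ u in a..(a + 2*Real.pi), Real.cos u :=
            intervalIntegral.integral_const_mul _ _
          rw [e1, e2, hcos0, mul_zero, sub_zero]
        rw [← hrw]
        have hbd : ∀ x ∈ Set.uIoc a (a + 2*Real.pi),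
            ‖(f x - f (a + 2*Real.pi)) * Real.cos x‖ ≤ f a - f (a + 2*Real.pi) := by
          intro x hx
          rw [uIoc_of_le hac] at hx
          have hx' : x ∈ Icc a b := ⟨le_of_lt hx.1, le_trans hx.2 hcb⟩
          have h1 : f (a + 2*Real.pi) ≤ f x := hanti hx' hcmem hx.2
          have h2 : f x ≤ f a := hanti ⟨le_refl a, hab⟩ hx' hx'.1
          calc ‖(f x - f (a + 2*Real.pi)) * Real.cos x‖
              = |f x - f (a + 2*Real.pi)| * |Real.cos x| := abs_mul _ _
            _ ≤ (f a - f (a + 2*Real.pi)) * 1 := mul_le_mul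
                (by rw [abs_of_nonneg (by linarith)]; linarith)
                (Real.abs_cos_le_one x) (abs_nonneg _) (by linarith)
            _ = f a - f (a + 2*Real.pi) := mul_one _
        have h3 := intervalIntegral.norm_integral_le_of_norm_le_const hbd
        rw [Real.norm_eq_abs] at h3
        apply le_trans h3
        have hca : a + 2*Real.pi - a = 2 * Real.pi := by ring
        rw [hca, abs_of_nonneg (by positivity)]
        ring_nf
        exact le_refl _
      calc |∫ u in a..b, f u * Real.cos u|
          ≤ |∫ u in a..(a+2*Real.pi), f u * Real.cos u|
            + |∫ u in (a+2*Real.pi)..b, f u * Real.cos u| := by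
            rw [hsplit]; exact abs_add_le _ _
        _ ≤ 2 * Real.pi * (f a - f (a+2*Real.pi)) + 4 * Real.pi * f (a+2*Real.pi) :=
            add_le_add hhead htail
        _ ≤ 4 * Real.pi * f a := by
            nlinarith [le_trans hfb (hanti hcmem ⟨hab, le_refl b⟩ hcb)]

lemma osc_bound (f : ℝ → ℝ) (a b : ℝ) (hab : a ≤ b) (hanti : AntitoneOn f (Icc a b))
    (hfb : 0 ≤ f b) : |∫ u in a..b, f u * Real.cos u| ≤ 4 * Real.pi * f a := by
  obtain ⟨n, hn⟩ := exists_nat_ge ((b - a) / (2 * Real.pi))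
  apply osc_aux f n a b hab _ hanti hfb
  have hpi := Real.pi_pos
  rw [div_le_iff₀ (by positivity)] at hn
  linarith


lemma potter_bound (L : ℝ → ℝ) (hLpos : ∀ t > 0, 0 < L t) (hLcont : ContinuousOn L (Ioi 0))
    (hLslow : ∀ s > 0, Tendsto (fun t => L (s * t) / L t) atTop (𝓝 1))
    (δ : ℝ) (hδ : 0 < δ) :
    ∃ C > 0, ∃ u₁ ≥ 1, ∀ u ≥ u₁, L u ≤ C * u ^ δ := by
  set h : ℝ → ℝ := fun x => Real.log (L (Real.exp x)) with hh_def
  have hLpos' : ∀ x : ℝ, 0 < L (Real.exp x) := fun x => hLpos _ (Real.exp_pos x)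
  have hh_cont : Continuous h := by
    rw [continuous_iff_continuousAt]
    intro x
    have h1 : ContinuousAt L (Real.exp x) :=
      hLcont.continuousAt (isOpen_Ioi.mem_nhds (Real.exp_pos x))
    have h2 : ContinuousAt Real.log (L (Real.exp x)) :=
      Real.continuousAt_log (ne_of_gt (hLpos' x))
    exact ContinuousAt.comp (ContinuousAt.comp h2 h1) Real.continuous_exp.continuousAt
  have hdiff : ∀ r : ℝ, Tendsto (fun x => h (x + r) - h x) atTop (𝓝 0) := by
    intro r
    have h1 : Tendsto (fun t => L (Real.exp r * t) / L t) atTop (𝓝 1) :=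
      hLslow _ (Real.exp_pos r)
    have h2 : Tendsto (fun x => L (Real.exp r * Real.exp x) / L (Real.exp x)) atTop (𝓝 1) :=
      h1.comp Real.tendsto_exp_atTop
    have h3 : Tendsto (fun x => Real.log (L (Real.exp r * Real.exp x) / L (Real.exp x)))
        atTop (𝓝 0) := by
      have := (Real.continuousAt_log (by norm_num : (1:ℝ) ≠ 0)).tendsto.comp h2
      rw [Real.log_one] at this; exact this
    apply h3.congr
    intro x
    rw [Real.log_div (ne_of_gt (hLpos _ (by positivity))) (ne_of_gt (hLpos' x))]
    simp only [hh_def, ← Real.exp_add]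
    rw [add_comm r x]
  -- the closed sets
  set E : ℕ → Set ℝ := fun n =>
    Icc 1 2 ∩ ⋂ (x : ℝ), ⋂ (_ : (n:ℝ) ≤ x), {r : ℝ | |h (x + r) - h x| ≤ δ} with hE_def
  have hEclosed : ∀ n, IsClosed (E n) := by
    intro n
    apply isClosed_Icc.inter
    apply isClosed_iInter; intro x
    apply isClosed_iInter; intro _
    exact isClosed_le (by fun_prop) continuous_const
  have hEmem : ∀ n (r : ℝ), r ∈ E n ↔ r ∈ Icc (1:ℝ) 2 ∧ ∀ x : ℝ, (n:ℝ) ≤ x → |h (x + r) - h x| ≤ δ := by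
    intro n r
    simp [hE_def, mem_iInter]
  have hEcover : ∀ r ∈ Icc (1:ℝ) 2, ∃ n : ℕ, r ∈ E n := by
    intro r hr
    have h1 : ∀ᶠ x in atTop, |h (x + r) - h x| ≤ δ := by
      have := (hdiff r).eventually (eventually_le_nhds (by linarith : (0:ℝ) < δ))
      filter_upwards [this.and ((hdiff r).eventually (eventually_ge_nhds (by linarith : -δ < 0)))]
      intro x hx
      rw [abs_le]; exact ⟨hx.2, hx.1⟩
    obtain ⟨X, hX⟩ := eventually_atTop.mp h1
    refine ⟨⌈X⌉₊, (hEmem _ _).mpr ⟨hr, fun x hx => hX x ?_⟩⟩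
    exact le_trans (Nat.le_ceil X) hx
  -- Baire category
  have : ∃ N : ℕ, (interior ((fun r : ↥(Icc (1:ℝ) 2) => (r : ℝ)) ⁻¹' E N)).Nonempty := by
    have hcs : CompleteSpace ↥(Icc (1:ℝ) 2) := (isClosed_Icc).completeSpace_coe
    have hne : Nonempty ↥(Icc (1:ℝ) 2) := ⟨⟨1, by norm_num⟩⟩
    apply nonempty_interior_of_iUnion_of_closed
    · exact fun n => (hEclosed n).preimage continuous_subtype_val
    · ext r
      simp only [mem_iUnion, mem_univ, iff_true, mem_preimage]
      exact hEcover r r.2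
  obtain ⟨N, r₀, hr₀⟩ := this
  obtain ⟨η, hη, hball⟩ := Metric.mem_nhds_iff.mp (mem_interior_iff_mem_nhds.mp hr₀)
  set ρ : ℝ := (r₀ : ℝ) with hρ_def
  have hρ : ρ ∈ Icc (1:ℝ) 2 := r₀.2
  set c : ℝ := max 1 (ρ - η/3) with hc_def
  set d : ℝ := min 2 (ρ + η/3) with hd_def
  have hc1 : 1 ≤ c := le_max_left _ _
  have hcd : c < d := by
    rw [hc_def, hd_def, max_lt_iff, lt_min_iff, lt_min_iff]
    constructor
    · exact ⟨by norm_num, by nlinarith [hρ.1]⟩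
    · exact ⟨by nlinarith [hρ.2], by nlinarith⟩
  have hstep : ∀ r, c ≤ r → r ≤ d → ∀ x, (N:ℝ) ≤ x → |h (x + r) - h x| ≤ δ := by
    intro r hcr hrd x hx
    have hr12 : r ∈ Icc (1:ℝ) 2 := ⟨le_trans hc1 hcr, le_trans hrd (min_le_left _ _)⟩
    have hrball : (⟨r, hr12⟩ : ↥(Icc (1:ℝ) 2)) ∈ Metric.ball r₀ η := by
      rw [Metric.mem_ball, Subtype.dist_eq, Real.dist_eq]
      show |r - ρ| < η
      rw [abs_lt]
      constructor
      · have := le_trans (le_max_right 1 (ρ - η/3)) hcr; linarith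
      · have := le_trans hrd (min_le_right _ _); linarith
    have := hball hrball
    rw [mem_preimage] at this
    exact ((hEmem N r).mp this).2 x hx
  have hc0 : (0:ℝ) < c := lt_of_lt_of_le zero_lt_one hc1
  -- chaining
  have claim1 : ∀ k : ℕ, ∀ z : ℝ, (k:ℝ)*c ≤ z → z ≤ (k:ℝ)*d → ∀ x, (N:ℝ) ≤ x →
      |h (x + z) - h x| ≤ (k:ℝ) * δ := by
    intro k
    induction k with
    | zero =>
      intro z h1 h2 x hx
      push_cast at h1 h2 ⊢
      have : z = 0 := le_antisymm (by linarith) (by linarith)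
      simp [this]
    | succ k ih =>
      intro z h1 h2 x hx
      push_cast at h1 h2
      set r : ℝ := max c (z - (k:ℝ)*d) with hr_def
      have hcr : c ≤ r := le_max_left _ _
      have hrd : r ≤ d := by
        apply max_le (le_of_lt hcd)
        linarith
      have hzr1 : (k:ℝ)*c ≤ z - r := by
        have h3 : r ≤ z - (k:ℝ)*c := by
          apply max_le
          · linarith
          · have : (k:ℝ)*c ≤ (k:ℝ)*d := by
              apply mul_le_mul_of_nonneg_left (le_of_lt hcd) (Nat.cast_nonneg k)
            linarith
        linarith
      have hzr2 : z - r ≤ (k:ℝ)*d := by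
        have : z - (k:ℝ)*d ≤ r := le_max_right _ _
        linarith
      have hzr0 : 0 ≤ z - r := le_trans (by positivity) hzr1
      have hx' : (N:ℝ) ≤ x + (z - r) := by linarith
      have e1 : x + z = (x + (z - r)) + r := by ring
      calc |h (x + z) - h x|
          ≤ |h ((x + (z-r)) + r) - h (x + (z-r))| + |h (x + (z-r)) - h x| := by
            rw [e1]; exact abs_sub_le _ _ _
        _ ≤ δ + (k:ℝ) * δ := add_le_add (hstep r hcr hrd _ hx') (ih (z-r) hzr1 hzr2 x hx)
        _ = ((k+1 : ℕ):ℝ) * δ := by push_cast; ring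
  -- conversion to the bound on L
  set K : ℕ := ⌈c/(d-c)⌉₊ + 1 with hK_def
  set x₁ : ℝ := (N:ℝ) + ((K:ℝ)+1)*c with hx₁_def
  have hx₁0 : 0 ≤ x₁ := by positivity
  have hy : ∀ y : ℝ, x₁ ≤ y → h y ≤ h N + δ * y := by
    intro y hy
    set z : ℝ := y - (N:ℝ) with hz_def
    have hz1 : ((K:ℝ)+1)*c ≤ z := by simp only [hz_def, hx₁_def] at hy ⊢; linarith
    have hz0 : 0 ≤ z := le_trans (by positivity) hz1
    set k : ℕ := ⌊z/c⌋₊ with hk_def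
    have hk1 : (k:ℝ)*c ≤ z := by
      have := Nat.floor_le (by positivity : 0 ≤ z/c)
      rw [← hk_def] at this
      calc (k:ℝ)*c ≤ (z/c)*c := mul_le_mul_of_nonneg_right this (le_of_lt hc0)
        _ = z := by field_simp
    have hkK : (K:ℝ) ≤ (k:ℝ) := by
      have h5 : (K:ℝ) ≤ z/c := by
        rw [le_div_iff₀ hc0]
        nlinarith
      exact_mod_cast Nat.cast_le.mpr (Nat.le_floor h5)
    have hk2 : z ≤ (k:ℝ)*d := by
      have h6 : z < ((k:ℝ)+1)*c := by
        have := Nat.lt_floor_add_one (z/c)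
        rw [← hk_def] at this
        calc z = (z/c)*c := by field_simp
          _ < ((k:ℝ)+1)*c := by
            apply mul_lt_mul_of_pos_right _ hc0
            exact_mod_cast this
      have h7 : c ≤ (k:ℝ)*(d-c) := by
        have h8 : c/(d-c) ≤ (K:ℝ) := by
          calc c/(d-c) ≤ (⌈c/(d-c)⌉₊ : ℝ) := Nat.le_ceil _
            _ ≤ (K:ℝ) := by rw [hK_def]; push_cast; linarith
        have h9 : c/(d-c) ≤ (k:ℝ) := le_trans h8 hkK
        rw [div_le_iff₀ (by linarith : (0:ℝ) < d - c)] at h9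
        linarith
      nlinarith
    have hkz : (k:ℝ)*δ ≤ z*δ := by
      apply mul_le_mul_of_nonneg_right _ (le_of_lt hδ)
      calc (k:ℝ) ≤ z/c := Nat.floor_le (by positivity)
        _ ≤ z/1 := by apply div_le_div_of_nonneg_left hz0 zero_lt_one hc1
        _ = z := div_one z
    have := claim1 k z hk1 hk2 (N:ℝ) (le_refl _)
    have h10 : h ((N:ℝ) + z) - h N ≤ (k:ℝ)*δ := le_trans (le_abs_self _) this
    have h11 : (N:ℝ) + z = y := by rw [hz_def]; ring
    rw [h11] at h10
    have h12 : z ≤ y := by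
      rw [hz_def]; have : (0:ℝ) ≤ (N:ℝ) := Nat.cast_nonneg N; linarith
    nlinarith
  refine ⟨Real.exp (h N), Real.exp_pos _, Real.exp x₁, Real.one_le_exp hx₁0, ?_⟩
  intro u hu
  have hu0 : 0 < u := lt_of_lt_of_le (Real.exp_pos x₁) hu
  have hlog : x₁ ≤ Real.log u := (Real.le_log_iff_exp_le hu0).mpr hu
  have h13 := hy (Real.log u) hlog
  have h14 : h (Real.log u) = Real.log (L u) := by
    simp only [hh_def, Real.exp_log hu0]
  rw [h14] at h13
  have h15 : L u = Real.exp (Real.log (L u)) := (Real.exp_log (hLpos u hu0)).symm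
  rw [h15]
  calc Real.exp (Real.log (L u)) ≤ Real.exp (h N + δ * Real.log u) := Real.exp_le_exp.mpr h13
    _ = Real.exp (h N) * Real.exp (δ * Real.log u) := Real.exp_add _ _
    _ = Real.exp (h N) * u ^ δ := by
        rw [Real.rpow_def_of_pos hu0, mul_comm δ (Real.log u)]




lemma psi_bound (γ : ℝ) (hγ : γ ∈ Set.Ioo (0:ℝ) 2)
    (L : ℝ → ℝ) (hLpos : ∀ t > 0, 0 < L t)
    (hLslow : ∀ s > 0, Tendsto (fun t => L (s * t) / L t) atTop (𝓝 1))
    (R : ℝ → ℝ) (hReven : ∀ t, R (-t) = R t)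
    (hRbdd : ∃ M, ∀ t, |R t| ≤ M) (hRcont : Continuous R)
    (hRL : ∀ t > 0, R t = L t / t ^ γ)
    (hLslowinc : γ ≤ 1 → ∃ L' : ℝ → ℝ, (∀ t > 0, HasDerivAt L (L' t) t) ∧
      Tendsto (fun t => t * L' t / L t) atTop (𝓝 0)) :
    ∃ K ≥ 1, ∀ y : ℝ, |∫ u in (0:ℝ)..y, R u * Real.cos u| ≤ K := by
  obtain ⟨M, hM⟩ := hRbdd
  set M' : ℝ := max M 1 with hM'_def
  have hM'1 : 1 ≤ M' := le_max_right _ _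
  have hM'0 : 0 < M' := lt_of_lt_of_le zero_lt_one hM'1
  have hM' : ∀ t, |R t| ≤ M' := fun t => le_trans (hM t) (le_max_left _ _)
  have hRpos : ∀ u : ℝ, 0 < u → 0 < R u := by
    intro u hu
    rw [hRL u hu]
    exact div_pos (hLpos u hu) (Real.rpow_pos_of_pos hu γ)
  have hcont : Continuous (fun u => R u * Real.cos u) := hRcont.mul Real.continuous_cos
  have hbd1 : ∀ (a b : ℝ), |∫ u in a..b, R u * Real.cos u| ≤ M' * |b - a| := by
    intro a b
    rw [← Real.norm_eq_abs]
    apply intervalIntegral.norm_integral_le_of_norm_le_const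
    intro x _
    calc ‖R x * Real.cos x‖ = |R x| * |Real.cos x| := abs_mul _ _
      _ ≤ M' * 1 := mul_le_mul (hM' x) (Real.abs_cos_le_one x) (abs_nonneg _) (le_of_lt hM'0)
      _ = M' := mul_one _
  -- reduction to y ≥ 0
  have hsymm : ∀ y : ℝ, (∫ u in (0:ℝ)..(-y), R u * Real.cos u)
      = - ∫ u in (0:ℝ)..y, R u * Real.cos u := by
    intro y
    have h1 : (∫ u in (0:ℝ)..y, (fun x => R x * Real.cos x) (-u))
        = ∫ u in (-y)..(-(0:ℝ)), R u * Real.cos u :=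
      intervalIntegral.integral_comp_neg (fun x => R x * Real.cos x)
    simp only [hReven, Real.cos_neg, neg_zero] at h1
    rw [intervalIntegral.integral_symm (-y) 0, ← h1]
  -- it suffices to bound for nonnegative y
  suffices hpos : ∃ K ≥ 1, ∀ y : ℝ, 0 ≤ y → |∫ u in (0:ℝ)..y, R u * Real.cos u| ≤ K by
    obtain ⟨K, hK1, hK⟩ := hpos
    refine ⟨K, hK1, fun y => ?_⟩
    rcases le_or_gt 0 y with hy | hy
    · exact hK y hy
    · have h2 : y = -(-y) := by ring
      rw [h2, hsymm, abs_neg]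
      exact hK (-y) (by linarith)
  rcases le_or_gt γ 1 with hγ1 | hγ1
  · -- case γ ≤ 1 : Dirichlet-type argument
    obtain ⟨L', hLderiv, hLtend⟩ := hLslowinc hγ1
    have hγ0 := hγ.1
    have hev : ∀ᶠ u in atTop, u * L' u / L u ≤ γ / 2 :=
      hLtend.eventually (eventually_le_nhds (by linarith))
    obtain ⟨t₀', ht₀'⟩ := eventually_atTop.mp hev
    set t₀ : ℝ := max t₀' 1 with ht₀_def
    have ht₀1 : 1 ≤ t₀ := le_max_right _ _
    have ht₀0 : 0 < t₀ := lt_of_lt_of_le zero_lt_one ht₀1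
    have hDR : ∀ x, t₀ < x → HasDerivAt R (L' x * x ^ (-γ) + L x * (-γ * x ^ (-γ - 1))) x := by
      intro x hx
      have hx0 : 0 < x := lt_trans ht₀0 hx
      have hp : HasDerivAt (fun u : ℝ => u ^ (-γ)) (-γ * x ^ (-γ - 1)) x :=
        Real.hasDerivAt_rpow_const (Or.inl (ne_of_gt hx0))
      have hψ : HasDerivAt (fun u : ℝ => L u * u ^ (-γ))
          (L' x * x ^ (-γ) + L x * (-γ * x ^ (-γ - 1))) x :=
        (hLderiv x hx0).mul hp
      have heq : (fun u : ℝ => L u * u ^ (-γ)) =ᶠ[𝓝 x] R := by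
        filter_upwards [isOpen_Ioi.mem_nhds (mem_Ioi.mpr hx0)] with u hu
        rw [hRL u hu, Real.rpow_neg (le_of_lt hu), div_eq_mul_inv]
      exact hψ.congr_of_eventuallyEq heq.symm
    have hanti : AntitoneOn R (Ici t₀) := by
      apply antitoneOn_of_deriv_nonpos (convex_Ici t₀) hRcont.continuousOn
      · intro x hx
        rw [interior_Ici] at hx
        exact (hDR x hx).differentiableAt.differentiableWithinAt
      intro x hx
      rw [interior_Ici] at hx
      have hx0 : 0 < x := lt_trans ht₀0 hx
      rw [(hDR x hx).deriv]
      -- show the derivative is nonpositive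
      have hLx : 0 < L x := hLpos x hx0
      have hkey : x * L' x / L x ≤ γ / 2 := ht₀' x (le_trans (le_max_left _ _) (le_of_lt hx))
      have hkey' : x * L' x ≤ γ / 2 * L x := by
        rw [div_le_iff₀ hLx] at hkey; linarith
      have hq : (0:ℝ) < x ^ (-γ - 1) := Real.rpow_pos_of_pos hx0 _
      have hxg : x ^ (-γ) = x ^ (-γ - 1) * x := by
        rw [← Real.rpow_add_one (ne_of_gt hx0) (-γ - 1)]
        norm_num
      rw [hxg]
      have h5 : L' x * (x ^ (-γ - 1) * x) = (x * L' x) * x ^ (-γ - 1) := by ring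
      rw [h5]
      have h6 : (x * L' x) * x ^ (-γ - 1) ≤ (γ / 2 * L x) * x ^ (-γ - 1) :=
        mul_le_mul_of_nonneg_right hkey' (le_of_lt hq)
      nlinarith [mul_nonneg (mul_nonneg (le_of_lt hγ0) (le_of_lt hLx)) (le_of_lt hq)]
    refine ⟨M' * t₀ + 4 * Real.pi * M' + 1, by nlinarith [Real.pi_pos, mul_le_mul hM'1 ht₀1 zero_le_one (le_of_lt hM'0)], ?_⟩
    intro y hy
    have hpi := Real.pi_pos
    rcases le_or_gt y t₀ with hyt | hyt
    · calc |∫ u in (0:ℝ)..y, R u * Real.cos u| ≤ M' * |y - 0| := hbd1 0 y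
        _ = M' * y := by rw [sub_zero, abs_of_nonneg hy]
        _ ≤ M' * t₀ := mul_le_mul_of_nonneg_left hyt (le_of_lt hM'0)
        _ ≤ M' * t₀ + 4 * Real.pi * M' + 1 := by nlinarith
    · have hsplit : (∫ u in (0:ℝ)..y, R u * Real.cos u)
          = (∫ u in (0:ℝ)..t₀, R u * Real.cos u) + ∫ u in t₀..y, R u * Real.cos u := by
        rw [intervalIntegral.integral_add_adjacent_intervals
          (hcont.intervalIntegrable _ _) (hcont.intervalIntegrable _ _)]
      have h7 : |∫ u in t₀..y, R u * Real.cos u| ≤ 4 * Real.pi * R t₀ := by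
        apply osc_bound R t₀ y (le_of_lt hyt)
        · exact hanti.mono (fun z hz => hz.1)
        · exact le_of_lt (hRpos y (lt_trans ht₀0 hyt))
      have h8 : R t₀ ≤ M' := le_trans (le_abs_self _) (hM' t₀)
      calc |∫ u in (0:ℝ)..y, R u * Real.cos u|
          ≤ |∫ u in (0:ℝ)..t₀, R u * Real.cos u| + |∫ u in t₀..y, R u * Real.cos u| := by
            rw [hsplit]; exact abs_add_le _ _
        _ ≤ M' * |t₀ - 0| + 4 * Real.pi * R t₀ := add_le_add (hbd1 0 t₀) h7
        _ ≤ M' * t₀ + 4 * Real.pi * M' := by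
            rw [sub_zero, abs_of_nonneg (le_of_lt ht₀0)]
            have : 4 * Real.pi * R t₀ ≤ 4 * Real.pi * M' :=
              mul_le_mul_of_nonneg_left h8 (by positivity)
            linarith
        _ ≤ M' * t₀ + 4 * Real.pi * M' + 1 := by linarith
  · -- case γ > 1 : Potter bound and absolute integrability
    have hLcont : ContinuousOn L (Ioi 0) := by
      have : ∀ u ∈ Ioi (0:ℝ), L u = R u * u ^ γ := by
        intro u hu
        rw [hRL u hu, div_mul_cancel₀]
        exact ne_of_gt (Real.rpow_pos_of_pos hu γ)
      apply ContinuousOn.congr _ this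
      apply hRcont.continuousOn.mul
      intro u hu
      exact (Real.continuousAt_rpow_const u γ (Or.inl (ne_of_gt hu))).continuousWithinAt
    set δ : ℝ := (γ - 1) / 2 with hδ_def
    have hδ : 0 < δ := by rw [hδ_def]; linarith
    obtain ⟨C, hC, u₁, hu₁, hP⟩ := potter_bound L hLpos hLcont hLslow δ hδ
    set r : ℝ := δ - γ with hr_def
    have hr1 : r + 1 < 0 := by rw [hr_def, hδ_def]; linarith
    have hrne : r ≠ -1 := by intro h; rw [h] at hr1; norm_num at hr1
    have hu₁0 : 0 < u₁ := lt_of_lt_of_le zero_lt_one hu₁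
    have hRu : ∀ u, u₁ ≤ u → |R u * Real.cos u| ≤ C * u ^ r := by
      intro u hu
      have hu0 : 0 < u := lt_of_lt_of_le hu₁0 hu
      have h1 : |R u * Real.cos u| ≤ R u := by
        rw [abs_mul, abs_of_pos (hRpos u hu0)]
        calc R u * |Real.cos u| ≤ R u * 1 :=
          mul_le_mul_of_nonneg_left (Real.abs_cos_le_one u) (le_of_lt (hRpos u hu0))
        _ = R u := mul_one _
      apply le_trans h1
      rw [hRL u hu0, hr_def, Real.rpow_sub hu0, div_le_iff₀ (Real.rpow_pos_of_pos hu0 γ)]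
      calc L u ≤ C * u ^ δ := hP u hu
        _ = C * u ^ δ / u ^ γ * u ^ γ := by
            field_simp
      ring_nf
      rw [mul_comm]
    refine ⟨M' * u₁ + C * u₁ ^ (r+1) / (-(r+1)) + 1, ?_, ?_⟩
    · have : 0 < C * u₁ ^ (r+1) / (-(r+1)) := by
        apply div_pos (mul_pos hC (Real.rpow_pos_of_pos hu₁0 _)) (by linarith)
      nlinarith [mul_le_mul hM'1 hu₁ zero_le_one (le_of_lt hM'0)]
    intro y hy
    rcases le_or_gt y u₁ with hyu | hyu
    · have : 0 < C * u₁ ^ (r+1) / (-(r+1)) := by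
        apply div_pos (mul_pos hC (Real.rpow_pos_of_pos hu₁0 _)) (by linarith)
      calc |∫ u in (0:ℝ)..y, R u * Real.cos u| ≤ M' * |y - 0| := hbd1 0 y
        _ = M' * y := by rw [sub_zero, abs_of_nonneg hy]
        _ ≤ M' * u₁ := mul_le_mul_of_nonneg_left hyu (le_of_lt hM'0)
        _ ≤ M' * u₁ + C * u₁ ^ (r+1) / (-(r+1)) + 1 := by linarith
    · have hsplit : (∫ u in (0:ℝ)..y, R u * Real.cos u)
          = (∫ u in (0:ℝ)..u₁, R u * Real.cos u) + ∫ u in u₁..y, R u * Real.cos u := by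
        rw [intervalIntegral.integral_add_adjacent_intervals
          (hcont.intervalIntegrable _ _) (hcont.intervalIntegrable _ _)]
      have h0uy : (0:ℝ) ∉ Set.uIcc u₁ y := by
        rw [Set.uIcc_of_le (le_of_lt hyu)]
        intro h
        exact absurd h.1 (by linarith)
      have hrint : IntervalIntegrable (fun u : ℝ => C * u ^ r) volume u₁ y := by
        apply ContinuousOn.intervalIntegrable
        intro u hu
        rw [Set.uIcc_of_le (le_of_lt hyu)] at hu
        have hu0 : 0 < u := lt_of_lt_of_le hu₁0 hu.1
        exact ((Real.continuousAt_rpow_const u r (Or.inl (ne_of_gt hu0))).continuousWithinAt).const_smul C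
      have h9 : |∫ u in u₁..y, R u * Real.cos u| ≤ ∫ u in u₁..y, |R u * Real.cos u| :=
        intervalIntegral.abs_integral_le_integral_abs (le_of_lt hyu)
      have h10 : (∫ u in u₁..y, |R u * Real.cos u|) ≤ ∫ u in u₁..y, C * u ^ r := by
        apply intervalIntegral.integral_mono_on (le_of_lt hyu)
          ((hcont.abs).intervalIntegrable _ _) hrint
        intro u hu
        exact hRu u hu.1
      have h11 : (∫ u in u₁..y, C * u ^ r) = C * ((y ^ (r+1) - u₁ ^ (r+1)) / (r+1)) := by
        rw [intervalIntegral.integral_const_mul]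
        congr 1
        exact integral_rpow (Or.inr ⟨hrne, h0uy⟩)
      have hq0 : (0:ℝ) < -(r+1) := by linarith
      have hya : 0 ≤ y ^ (r+1) := Real.rpow_nonneg hy _
      have h12 : C * ((y ^ (r+1) - u₁ ^ (r+1)) / (r+1)) ≤ C * u₁ ^ (r+1) / (-(r+1)) := by
        rw [mul_div_assoc]
        apply mul_le_mul_of_nonneg_left _ (le_of_lt hC)
        have hr10 : r + 1 ≠ 0 := by linarith
        have e : (y ^ (r+1) - u₁ ^ (r+1)) / (r+1) = (u₁ ^ (r+1) - y ^ (r+1)) / (-(r+1)) := by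
          rw [div_neg, ← neg_div, neg_sub]
        rw [e]
        exact (div_le_div_iff_of_pos_right hq0).mpr (by linarith)
      calc |∫ u in (0:ℝ)..y, R u * Real.cos u|
          ≤ |∫ u in (0:ℝ)..u₁, R u * Real.cos u| + |∫ u in u₁..y, R u * Real.cos u| := by
            rw [hsplit]; exact abs_add_le _ _
        _ ≤ M' * |u₁ - 0| + ∫ u in u₁..y, |R u * Real.cos u| := add_le_add (hbd1 0 u₁) h9
        _ ≤ M' * u₁ + C * ((y ^ (r+1) - u₁ ^ (r+1)) / (r+1)) := by
            rw [sub_zero, abs_of_pos hu₁0]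
            have := le_trans h10 (le_of_eq h11)
            linarith
        _ ≤ M' * u₁ + C * u₁ ^ (r+1) / (-(r+1)) := by linarith
        _ ≤ M' * u₁ + C * u₁ ^ (r+1) / (-(r+1)) + 1 := by linarith


lemma gauss_sq_integrable (m : ℝ) (s : NNReal) :
    Integrable (fun x : ℝ => x ^ 2) (gaussianReal m s) := by
  by_cases hs : s = 0
  · subst hs
    rw [gaussianReal_zero_var]
    constructor
    · exact (measurable_id.pow_const 2).aestronglyMeasurable
    · simp [HasFiniteIntegral, lintegral_dirac, ← ENNReal.coe_pow]
  · rw [gaussianReal_of_var_ne_zero m hs]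
    rw [integrable_withDensity_iff (measurable_gaussianPDF m s)
      (Filter.Eventually.of_forall fun x => ENNReal.ofReal_lt_top)]
    have hs0 : (0:ℝ) < (s:ℝ) := by
      have := NNReal.coe_pos.mpr (pos_iff_ne_zero.mpr hs)
      exact this
    have hb : (0:ℝ) < (2 * (s:ℝ))⁻¹ := by positivity
    have e1 : Integrable (fun y : ℝ => y^2 * Real.exp (-(2*(s:ℝ))⁻¹ * y^2)) volume := by
      have h := integrable_rpow_mul_exp_neg_mul_sq hb (s := (2:ℝ)) (by norm_num)
      apply h.congr
      apply ae_of_all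
      intro y
      show y ^ (2:ℝ) * Real.exp (-(2*(s:ℝ))⁻¹ * y^2) = y ^ (2:ℕ) * Real.exp (-(2*(s:ℝ))⁻¹ * y^2)
      rw [← Real.rpow_natCast y 2]
      norm_num
    have e2 : Integrable (fun y : ℝ => y * Real.exp (-(2*(s:ℝ))⁻¹ * y^2)) volume :=
      integrable_mul_exp_neg_mul_sq hb
    have e3 : Integrable (fun y : ℝ => Real.exp (-(2*(s:ℝ))⁻¹ * y^2)) volume :=
      integrable_exp_neg_mul_sq hb
    have h1 : Integrable (fun y : ℝ => (y + m)^2 * Real.exp (-(2*(s:ℝ))⁻¹ * y^2)) volume := by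
      apply ((e1.add (e2.const_mul (2*m))).add (e3.const_mul (m^2))).congr
      apply ae_of_all
      intro y
      simp only [Pi.add_apply]
      ring
    have h2 := h1.comp_sub_right m
    have h3 : Integrable (fun x : ℝ => x^2 * Real.exp (-(2*(s:ℝ))⁻¹ * (x - m)^2)) volume := by
      apply h2.congr
      apply ae_of_all
      intro x
      ring_nf
    have hfe : (fun x : ℝ => x^2 * (gaussianPDF m s x).toReal)
        = fun x => (Real.sqrt (2*Real.pi*(s:ℝ)))⁻¹ * (x^2 * Real.exp (-(2*(s:ℝ))⁻¹ * (x-m)^2)) := by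
      funext x
      rw [gaussianPDF_def, ENNReal.toReal_ofReal (gaussianPDFReal_nonneg m s x), gaussianPDFReal]
      rw [show -(x-m)^2/(2*(s:ℝ)) = -(2*(s:ℝ))⁻¹ * (x-m)^2 by ring]
      ring
    rw [hfe]
    exact h3.const_mul _


lemma core_bound {Ω : Type*} [MeasurableSpace Ω] (P : Measure Ω) [IsProbabilityMeasure P]
    (R : ℝ → ℝ) (hRcont : Continuous R) (M : ℝ) (hM : ∀ u, |R u| ≤ M)
    (v : ℝ → Ω → ℝ) (hvmeas : Measurable (Function.uncurry v))
    (hvcont : ∀ ω, Continuous fun u => v u ω)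
    (hL2 : ∀ a : ℝ, Integrable (fun ω => v a ω ^ 2) P)
    (hvcov : ∀ s t : ℝ, ∫ ω, v t ω * v s ω ∂P = R (t - s))
    (K : ℝ) (hK0 : 0 ≤ K) (hK : ∀ y : ℝ, |∫ u in (0:ℝ)..y, R u * Real.cos u| ≤ K)
    (ε : ℝ) (hε : 0 < ε) (s t : ℝ) (hst : s ≤ t) (g : ℝ → ℝ)
    (hg : g = Real.sin ∨ g = Real.cos) :
    (∫ ω, (ε⁻¹ * ∫ τ in s..t, v (τ / ε^2) ω * g (τ / ε^2)) ^ 2 ∂P) ≤ 2 * K * (t - s) := by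
  have hε2 : (0:ℝ) < ε^2 := by positivity
  set ν : Measure ℝ := volume.restrict (Ioc s t) with hν
  have hνfin : IsFiniteMeasure ν := by
    constructor
    rw [hν, Measure.restrict_apply_univ, Real.volume_Ioc]
    exact ENNReal.ofReal_lt_top
  -- basic measurability and integrability
  have hvm : ∀ b : ℝ, Measurable (fun ω => v b ω) := fun b =>
    hvmeas.comp (measurable_const.prodMk measurable_id)
  have hvv_int : ∀ a b : ℝ, Integrable (fun ω => v a ω * v b ω) P := by
    intro a b
    apply Integrable.mono' ((hL2 a).add (hL2 b)) ((hvm a).mul (hvm b)).aestronglyMeasurable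
    apply ae_of_all
    intro ω
    simp only [Pi.add_apply, Pi.mul_apply]
    rw [Real.norm_eq_abs, abs_mul]
    nlinarith [sq_nonneg (|v a ω| - |v b ω|), abs_nonneg (v a ω), abs_nonneg (v b ω),
      sq_abs (v a ω), sq_abs (v b ω)]
  have hEvv : ∀ a b : ℝ, ∫ ω, v a ω * v b ω ∂P = R (a - b) := fun a b => hvcov b a
  have hER0 : ∀ a : ℝ, ∫ ω, v a ω ^ 2 ∂P = R 0 := by
    intro a
    have : (fun ω => v a ω ^ 2) = fun ω => v a ω * v a ω := by funext ω; ring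
    rw [this, hEvv a a, sub_self]
  -- the kernel H
  set A : ℝ → ℝ := fun τ => τ / ε^2 with hA
  set H : ℝ × ℝ → Ω → ℝ := fun p ω => v (A p.1) ω * v (A p.2) ω * Real.cos (A p.1 - A p.2)
    with hH
  have hAm : Measurable A := measurable_id.div_const _
  have hHmeas : Measurable (fun q : (ℝ × ℝ) × Ω => H q.1 q.2) := by
    apply Measurable.mul
    · apply Measurable.mul
      · exact hvmeas.comp (((hAm.comp measurable_fst.fst)).prodMk measurable_snd)
      · exact hvmeas.comp (((hAm.comp measurable_fst.snd)).prodMk measurable_snd)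
    · exact (Real.measurable_cos.comp
        (((hAm.comp measurable_fst.fst)).sub ((hAm.comp measurable_fst.snd)))).comp measurable_id
  have hsec : ∀ p : ℝ × ℝ, Integrable (fun ω => H p ω) P := fun p =>
    (hvv_int _ _).mul_const _
  have hnormbd : ∀ p : ℝ × ℝ, (∫ ω, ‖H p ω‖ ∂P) ≤ 2 * R 0 := by
    intro p
    have h1 : ∀ ω, ‖H p ω‖ ≤ v (A p.1) ω ^ 2 + v (A p.2) ω ^ 2 := by
      intro ω
      rw [hH, Real.norm_eq_abs, abs_mul, abs_mul]
      have := Real.abs_cos_le_one (A p.1 - A p.2)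
      nlinarith [sq_nonneg (|v (A p.1) ω| - |v (A p.2) ω|), abs_nonneg (v (A p.1) ω),
        abs_nonneg (v (A p.2) ω), sq_abs (v (A p.1) ω), sq_abs (v (A p.2) ω),
        abs_nonneg (v (A p.1) ω * v (A p.2) ω), abs_mul (v (A p.1) ω) (v (A p.2) ω)]
    calc (∫ ω, ‖H p ω‖ ∂P) ≤ ∫ ω, (v (A p.1) ω ^ 2 + v (A p.2) ω ^ 2) ∂P :=
          integral_mono (hsec p).norm ((hL2 _).add (hL2 _)) h1
      _ = R 0 + R 0 := by rw [integral_add (hL2 _) (hL2 _), hER0, hER0]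
      _ = 2 * R 0 := by ring
  have hH_int : Integrable (fun q : (ℝ × ℝ) × Ω => H q.1 q.2) ((ν.prod ν).prod P) := by
    rw [integrable_prod_iff hHmeas.aestronglyMeasurable]
    constructor
    · exact ae_of_all _ fun p => hsec p
    · apply Integrable.mono' (integrable_const (2 * R 0))
      · exact (hHmeas.norm.stronglyMeasurable.integral_prod_right').aestronglyMeasurable
      · apply ae_of_all
        intro p
        rw [Real.norm_eq_abs, abs_of_nonneg (integral_nonneg fun ω => norm_nonneg _)]
        exact hnormbd p
  -- pointwise identity
  have hfS_int : ∀ ω, Integrable (fun τ => v (A τ) ω * Real.sin (A τ)) ν := by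
    intro ω
    have hc : Continuous fun τ => v (A τ) ω * Real.sin (A τ) :=
      (((hvcont ω).comp (continuous_id.div_const _))).mul
        (Real.continuous_sin.comp (continuous_id.div_const _))
    rw [hν]
    exact (intervalIntegrable_iff_integrableOn_Ioc_of_le hst).mp (hc.intervalIntegrable s t)
  have hfC_int : ∀ ω, Integrable (fun τ => v (A τ) ω * Real.cos (A τ)) ν := by
    intro ω
    have hc : Continuous fun τ => v (A τ) ω * Real.cos (A τ) :=
      (((hvcont ω).comp (continuous_id.div_const _))).mul
        (Real.continuous_cos.comp (continuous_id.div_const _))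
    rw [hν]
    exact (intervalIntegrable_iff_integrableOn_Ioc_of_le hst).mp (hc.intervalIntegrable s t)
  have hIg_sq : ∀ ω, (∫ τ in s..t, v (A τ) ω * Real.sin (A τ)) ^ 2
      + (∫ τ in s..t, v (A τ) ω * Real.cos (A τ)) ^ 2 = ∫ p, H p ω ∂(ν.prod ν) := by
    intro ω
    rw [intervalIntegral.integral_of_le hst, intervalIntegral.integral_of_le hst, ← hν]
    rw [pow_two, pow_two, ← integral_prod_mul, ← integral_prod_mul,
      ← integral_add ((hfS_int ω).mul_prod (hfS_int ω)) ((hfC_int ω).mul_prod (hfC_int ω))]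
    apply integral_congr_ae
    apply ae_of_all
    intro p
    simp only [hH, Real.cos_sub]
    ring
  -- swap the integrals
  have hswap := integral_integral_swap (f := fun p ω => H p ω) hH_int
  -- value of the inner integral
  set F : ℝ → ℝ := fun u => R (A u) * Real.cos (A u) with hF
  have hvalF : ∀ p : ℝ × ℝ, ∫ ω, H p ω ∂P = F (p.1 - p.2) := by
    intro p
    rw [hH]
    rw [integral_mul_const, hEvv]
    rw [hF]
    have : A p.1 - A p.2 = A (p.1 - p.2) := by rw [hA]; simp [sub_div]
    rw [this]
  have hFcont : Continuous F :=
    (hRcont.comp (continuous_id.div_const _)).mul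
      (Real.continuous_cos.comp (continuous_id.div_const _))
  have hFii : ∀ a b : ℝ, IntervalIntegrable F volume a b := fun a b =>
    hFcont.intervalIntegrable a b
  set Φ : ℝ → ℝ := fun x => ∫ u in (0:ℝ)..x, F u with hΦ
  have hΦcont : Continuous Φ := intervalIntegral.continuous_primitive hFii 0
  have hΦbd : ∀ x : ℝ, |Φ x| ≤ ε^2 * K := by
    intro x
    have h1 := intervalIntegral.integral_comp_div (a := 0) (b := x) (c := ε^2)
      (f := fun u => R u * Real.cos u) (ne_of_gt hε2)
    rw [zero_div] at h1
    have h2 : Φ x = ε^2 * ∫ u in (0:ℝ)..(x / ε^2), R u * Real.cos u := by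
      rw [hΦ, ← smul_eq_mul, ← h1]
    rw [h2, abs_mul, abs_of_pos hε2]
    exact mul_le_mul_of_nonneg_left (hK _) (le_of_lt hε2)
  -- compute the double integral
  have hFint2 : Integrable (fun p : ℝ × ℝ => F (p.1 - p.2)) (ν.prod ν) := by
    apply Integrable.mono' (integrable_const (max M 0))
    · exact (hFcont.comp (continuous_fst.sub continuous_snd)).aestronglyMeasurable
    · apply ae_of_all
      intro p
      rw [Real.norm_eq_abs, hF, abs_mul]
      calc |R (A (p.1 - p.2))| * |Real.cos (A (p.1 - p.2))| ≤ M * 1 :=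
            mul_le_mul (hM _) (Real.abs_cos_le_one _) (abs_nonneg _)
              (le_trans (abs_nonneg _) (hM 0))
        _ ≤ max M 0 := by rw [mul_one]; exact le_max_left _ _
  have hdouble : ∫ ω, ((∫ τ in s..t, v (A τ) ω * Real.sin (A τ)) ^ 2
      + (∫ τ in s..t, v (A τ) ω * Real.cos (A τ)) ^ 2) ∂P
      = (∫ u in (0:ℝ)..(t - s), Φ u) - ∫ u in (s - t)..(0:ℝ), Φ u := by
    calc ∫ ω, ((∫ τ in s..t, v (A τ) ω * Real.sin (A τ)) ^ 2
          + (∫ τ in s..t, v (A τ) ω * Real.cos (A τ)) ^ 2) ∂P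
        = ∫ ω, (∫ p, H p ω ∂(ν.prod ν)) ∂P := by
          apply integral_congr_ae (ae_of_all _ fun ω => hIg_sq ω)
      _ = ∫ p, (∫ ω, H p ω ∂P) ∂(ν.prod ν) := hswap.symm
      _ = ∫ p, F (p.1 - p.2) ∂(ν.prod ν) :=
          integral_congr_ae (ae_of_all _ hvalF)
      _ = ∫ τ, (∫ σ, F (τ - σ) ∂ν) ∂ν := integral_prod _ hFint2
      _ = ∫ τ, (Φ (τ - s) - Φ (τ - t)) ∂ν := by
          apply integral_congr_ae (ae_of_all _ ?_)
          intro τ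
          have e1 : ∫ σ, F (τ - σ) ∂ν = ∫ σ in s..t, F (τ - σ) := by
            rw [hν, intervalIntegral.integral_of_le hst]
          rw [e1, intervalIntegral.integral_comp_sub_left F τ]
          rw [← intervalIntegral.integral_interval_sub_left (hFii 0 (τ - s)) (hFii 0 (τ - t))]
      _ = (∫ τ in s..t, (Φ (τ - s) - Φ (τ - t))) := by
          rw [hν, intervalIntegral.integral_of_le hst]
      _ = (∫ τ in s..t, Φ (τ - s)) - ∫ τ in s..t, Φ (τ - t) := by
          apply intervalIntegral.integral_sub
          · exact ((hΦcont.comp (continuous_id.sub continuous_const)).intervalIntegrable _ _)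
          · exact ((hΦcont.comp (continuous_id.sub continuous_const)).intervalIntegrable _ _)
      _ = (∫ u in (0:ℝ)..(t - s), Φ u) - ∫ u in (s - t)..(0:ℝ), Φ u := by
          rw [intervalIntegral.integral_comp_sub_right Φ s,
            intervalIntegral.integral_comp_sub_right Φ t, sub_self, sub_self]
  -- integrability of the sum of squares
  have hsum_int : Integrable (fun ω => (∫ τ in s..t, v (A τ) ω * Real.sin (A τ)) ^ 2
      + (∫ τ in s..t, v (A τ) ω * Real.cos (A τ)) ^ 2) P := by
    have h1 := hH_int.integral_prod_right
    apply h1.congr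
    apply ae_of_all
    intro ω
    exact (hIg_sq ω).symm
  -- measurability of the parametrized interval integrals
  have hIm : ∀ G : ℝ → ℝ, Measurable G →
      AEStronglyMeasurable (fun ω => (∫ τ in s..t, v (A τ) ω * G (A τ)) ^ 2) P := by
    intro G hG
    have h1 : StronglyMeasurable (fun q : Ω × ℝ => v (A q.2) q.1 * G (A q.2)) := by
      apply Measurable.stronglyMeasurable
      exact (hvmeas.comp ((hAm.comp measurable_snd).prodMk measurable_fst)).mul
        ((hG.comp hAm).comp measurable_snd)
    have h2 : StronglyMeasurable (fun ω => ∫ τ, v (A τ) ω * G (A τ) ∂ν) :=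
      h1.integral_prod_right'
    have h3 : (fun ω => (∫ τ in s..t, v (A τ) ω * G (A τ)) ^ 2)
        = fun ω => (∫ τ, v (A τ) ω * G (A τ) ∂ν) ^ 2 := by
      funext ω
      rw [intervalIntegral.integral_of_le hst, hν]
    rw [h3]
    exact (h2.pow 2).aestronglyMeasurable
  -- final chain for this g
  have hg_int : Integrable (fun ω => (∫ τ in s..t, v (A τ) ω * g (A τ)) ^ 2) P := by
    apply Integrable.mono' hsum_int
    · rcases hg with h | h <;> subst h
      · exact hIm _ Real.measurable_sin
      · exact hIm _ Real.measurable_cos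
    · apply ae_of_all
      intro ω
      rw [Real.norm_eq_abs, abs_of_nonneg (sq_nonneg _)]
      rcases hg with h | h <;> subst h
      · nlinarith [sq_nonneg (∫ τ in s..t, v (A τ) ω * Real.cos (A τ))]
      · nlinarith [sq_nonneg (∫ τ in s..t, v (A τ) ω * Real.sin (A τ))]
  have hle : (∫ ω, (∫ τ in s..t, v (A τ) ω * g (A τ)) ^ 2 ∂P)
      ≤ (∫ u in (0:ℝ)..(t - s), Φ u) - ∫ u in (s - t)..(0:ℝ), Φ u := by
    rw [← hdouble]
    apply integral_mono hg_int hsum_int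
    intro ω
    dsimp only
    rcases hg with h | h <;> subst h
    · nlinarith [sq_nonneg (∫ τ in s..t, v (A τ) ω * Real.cos (A τ))]
    · nlinarith [sq_nonneg (∫ τ in s..t, v (A τ) ω * Real.sin (A τ))]
  have hb1 : |∫ u in (0:ℝ)..(t - s), Φ u| ≤ ε^2 * K * (t - s) := by
    rw [← Real.norm_eq_abs]
    have := intervalIntegral.norm_integral_le_of_norm_le_const
      (C := ε^2 * K) (f := Φ) (a := (0:ℝ)) (b := t - s)
      (fun x _ => by rw [Real.norm_eq_abs]; exact hΦbd x)
    apply le_trans this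
    rw [sub_zero, abs_of_nonneg (by linarith)]
  have hb2 : |∫ u in (s - t)..(0:ℝ), Φ u| ≤ ε^2 * K * (t - s) := by
    rw [← Real.norm_eq_abs]
    have := intervalIntegral.norm_integral_le_of_norm_le_const
      (C := ε^2 * K) (f := Φ) (a := s - t) (b := (0:ℝ))
      (fun x _ => by rw [Real.norm_eq_abs]; exact hΦbd x)
    apply le_trans this
    rw [zero_sub, abs_neg, abs_of_nonpos (by linarith : s - t ≤ 0)]
    apply le_of_eq; ring
  -- put everything together
  have hfinal : (∫ ω, (∫ τ in s..t, v (A τ) ω * g (A τ)) ^ 2 ∂P)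
      ≤ 2 * (ε^2 * K) * (t - s) := by
    have h1 := abs_le.mp hb1
    have h2 := abs_le.mp hb2
    calc (∫ ω, (∫ τ in s..t, v (A τ) ω * g (A τ)) ^ 2 ∂P)
        ≤ (∫ u in (0:ℝ)..(t - s), Φ u) - ∫ u in (s - t)..(0:ℝ), Φ u := hle
      _ ≤ 2 * (ε^2 * K) * (t - s) := by linarith [h1.2, h2.1]
  have hrw : (fun ω => (ε⁻¹ * ∫ τ in s..t, v (τ / ε^2) ω * g (τ / ε^2)) ^ 2)
      = fun ω => (ε⁻¹)^2 * (∫ τ in s..t, v (A τ) ω * g (A τ)) ^ 2 := by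
    funext ω
    rw [mul_pow, hA]
  rw [hrw, integral_const_mul]
  calc (ε⁻¹)^2 * ∫ ω, (∫ τ in s..t, v (A τ) ω * g (A τ)) ^ 2 ∂P
      ≤ (ε⁻¹)^2 * (2 * (ε^2 * K) * (t - s)) :=
        mul_le_mul_of_nonneg_left hfinal (sq_nonneg _)
    _ = 2 * K * (t - s) := by field_simp



/-- With `v` a centered stationary Gaussian process with covariance
`R(t) = L(t)/t^γ` (`L` slowly varying, `γ ∈ (0,2)`, slow-increase condition when `γ ≤ 1`),
and `wᵢ^ε` the oscillatory integrals of the rescaled noise, for every `T > 0` there is a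
constant `C > 0` such that for all `ε ∈ (0,1]`, `s,t ∈ [0,T]` and `i ∈ {1,2}`,
`E[(wᵢ^ε(t)−wᵢ^ε(s))²] ≤ C|t−s|^{1−γ}` if `γ < 1` and `≤ C|t−s|^{2−γ}` if `γ ≥ 1`. -/
theorem stmt_2
    {Ω : Type*} [MeasurableSpace Ω] (P : Measure Ω) [IsProbabilityMeasure P]
    (γ : ℝ) (hγ : γ ∈ Set.Ioo (0:ℝ) 2)
    (L : ℝ → ℝ) (hLpos : ∀ t > 0, 0 < L t)
    (hLslow : ∀ s > 0, Tendsto (fun t => L (s * t) / L t) atTop (𝓝 1))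
    (R : ℝ → ℝ) (hReven : ∀ t, R (-t) = R t)
    (hRbdd : ∃ M, ∀ t, |R t| ≤ M) (hRcont : Continuous R)
    (hRL : ∀ t > 0, R t = L t / t ^ γ)
    (hLslowinc : γ ≤ 1 → ∃ L' : ℝ → ℝ, (∀ t > 0, HasDerivAt L (L' t) t) ∧
      Tendsto (fun t => t * L' t / L t) atTop (𝓝 0))
    (v : ℝ → Ω → ℝ)
    (hvmeas : Measurable (Function.uncurry v))
    (hvcont : ∀ ω, Continuous fun t => v t ω)
    (hvcentered : ∀ t, ∫ ω, v t ω ∂P = 0)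
    (hvgauss : ∀ (n : ℕ) (c : Fin n → ℝ) (t : Fin n → ℝ),
      ∃ (m : ℝ) (σ2 : NNReal),
        P.map (fun ω => ∑ i, c i * v (t i) ω) = ProbabilityTheory.gaussianReal m σ2)
    (hvcov : ∀ s t : ℝ, ∫ ω, v t ω * v s ω ∂P = R (t - s))
    (w : Fin 2 → ℝ → ℝ → Ω → ℝ)
    (hw1 : ∀ ε t ω, w 0 ε t ω = ε⁻¹ * ∫ τ in (0:ℝ)..t, v (τ / ε ^ 2) ω * Real.sin (τ / ε ^ 2))
    (hw2 : ∀ ε t ω, w 1 ε t ω = ε⁻¹ * ∫ τ in (0:ℝ)..t, v (τ / ε ^ 2) ω * Real.cos (τ / ε ^ 2)) :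
    ∀ T > 0, ∃ C > 0, ∀ ε ∈ Set.Ioc (0:ℝ) 1, ∀ s ∈ Set.Icc (0:ℝ) T, ∀ t ∈ Set.Icc (0:ℝ) T,
      ∀ i : Fin 2,
        (γ < 1 → (∫ ω, (w i ε t ω - w i ε s ω) ^ 2 ∂P) ≤ C * |t - s| ^ (1 - γ)) ∧
        (1 ≤ γ → (∫ ω, (w i ε t ω - w i ε s ω) ^ 2 ∂P) ≤ C * |t - s| ^ (2 - γ)) := by

  -- square integrability of the marginals, via Gaussianity
  have hL2 : ∀ a : ℝ, Integrable (fun ω => v a ω ^ 2) P := by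
    intro a
    have hvam : Measurable (fun ω => v a ω) :=
      hvmeas.comp (measurable_const.prodMk measurable_id)
    obtain ⟨m, σ2, hmap⟩ := hvgauss 1 (fun _ => 1) (fun _ => a)
    have heq : (fun ω => ∑ i : Fin 1, (fun _ : Fin 1 => (1:ℝ)) i * v ((fun _ : Fin 1 => a) i) ω)
        = fun ω => v a ω := by
      funext ω
      simp
    rw [heq] at hmap
    have h1 := gauss_sq_integrable m σ2
    rw [← hmap] at h1
    have h2 := (integrable_map_measure
      (by rw [hmap]; exact (measurable_id.pow_const 2).aestronglyMeasurable)
      hvam.aemeasurable).mp h1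
    exact h2
  obtain ⟨M, hM⟩ := hRbdd
  obtain ⟨K, hK1, hK⟩ := psi_bound γ hγ L hLpos hLslow R hReven ⟨M, hM⟩ hRcont hRL hLslowinc
  have hK0 : (0:ℝ) < K := lt_of_lt_of_le zero_lt_one hK1
  intro T hT
  set Tm : ℝ := max 1 T with hTm_def
  have hTm1 : 1 ≤ Tm := le_max_left _ _
  have hTm0 : 0 < Tm := lt_of_lt_of_le zero_lt_one hTm1
  set C : ℝ := 2 * K * Tm ^ (2:ℝ) with hC_def
  have hC0 : 0 < C := by
    apply mul_pos (by linarith)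
    exact Real.rpow_pos_of_pos hTm0 _
  refine ⟨C, hC0, ?_⟩
  intro ε hε s hs t ht i
  -- the key variance bound
  have key : ∀ a b : ℝ, a ≤ b → (∫ ω, (w i ε b ω - w i ε a ω) ^ 2 ∂P) ≤ 2 * K * (b - a) := by
    intro a b hab
    have hε0 : 0 < ε := hε.1
    have hε2 : (0:ℝ) < ε ^ 2 := by positivity
    have hcont : ∀ ω, ∀ G : ℝ → ℝ, Continuous G →
        Continuous fun τ => v (τ / ε ^ 2) ω * G (τ / ε ^ 2) := by
      intro ω G hG
      exact ((hvcont ω).comp (continuous_id.div_const _)).mul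
        (hG.comp (continuous_id.div_const _))
    fin_cases i
    · show (∫ ω, (w 0 ε b ω - w 0 ε a ω) ^ 2 ∂P) ≤ 2 * K * (b - a)
      have hrw : (fun ω => (w 0 ε b ω - w 0 ε a ω) ^ 2)
          = fun ω => (ε⁻¹ * ∫ τ in a..b, v (τ / ε ^ 2) ω * Real.sin (τ / ε ^ 2)) ^ 2 := by
        funext ω
        rw [hw1, hw1, ← mul_sub]
        congr 2
        exact intervalIntegral.integral_interval_sub_left
          ((hcont ω _ Real.continuous_sin).intervalIntegrable 0 b)
          ((hcont ω _ Real.continuous_sin).intervalIntegrable 0 a)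
      rw [hrw]
      exact core_bound P R hRcont M hM v hvmeas hvcont hL2 hvcov K (by linarith) hK
        ε hε0 a b hab Real.sin (Or.inl rfl)
    · show (∫ ω, (w 1 ε b ω - w 1 ε a ω) ^ 2 ∂P) ≤ 2 * K * (b - a)
      have hrw : (fun ω => (w 1 ε b ω - w 1 ε a ω) ^ 2)
          = fun ω => (ε⁻¹ * ∫ τ in a..b, v (τ / ε ^ 2) ω * Real.cos (τ / ε ^ 2)) ^ 2 := by
        funext ω
        rw [hw2, hw2, ← mul_sub]
        congr 2
        exact intervalIntegral.integral_interval_sub_left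
          ((hcont ω _ Real.continuous_cos).intervalIntegrable 0 b)
          ((hcont ω _ Real.continuous_cos).intervalIntegrable 0 a)
      rw [hrw]
      exact core_bound P R hRcont M hM v hvmeas hvcont hL2 hvcov K (by linarith) hK
        ε hε0 a b hab Real.cos (Or.inr rfl)
  -- variance bound in terms of |t - s|
  have hvar : (∫ ω, (w i ε t ω - w i ε s ω) ^ 2 ∂P) ≤ 2 * K * |t - s| := by
    rcases le_total s t with hst | hts
    · rw [abs_of_nonneg (by linarith)]
      exact key s t hst
    · rw [abs_of_nonpos (by linarith)]
      have hrw : (fun ω => (w i ε t ω - w i ε s ω) ^ 2)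
          = fun ω => (w i ε s ω - w i ε t ω) ^ 2 := by
        funext ω; ring
      rw [hrw]
      have := key t s hts
      calc (∫ ω, (w i ε s ω - w i ε t ω) ^ 2 ∂P) ≤ 2 * K * (s - t) := this
        _ = 2 * K * -(t - s) := by ring
  -- conversion of the linear bound into the desired power bounds
  set h : ℝ := |t - s| with hh_def
  have hh0 : 0 ≤ h := abs_nonneg _
  have hhT : h ≤ Tm := by
    rw [hh_def, abs_le]
    constructor
    · have := hs.1; have := ht.2; have : T ≤ Tm := le_max_right _ _; nlinarith [hs.1, ht.2, hs.2, ht.1, le_max_right (1:ℝ) T]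
    · have : T ≤ Tm := le_max_right _ _
      nlinarith [hs.1, ht.2, hs.2, ht.1]
  have hconv : ∀ e1 e2 : ℝ, 0 < e2 → e1 + e2 = 1 → 0 ≤ e1 → e1 ≤ 2 →
      2 * K * h ≤ C * h ^ e2 := by
    intro e1 e2 he2 hsum he1 he12
    rcases eq_or_lt_of_le hh0 with h0 | h0
    · rw [← h0, Real.zero_rpow (ne_of_gt he2)]
      simp
    · have hpow : h = h ^ e1 * h ^ e2 := by
        rw [← Real.rpow_add h0, hsum, Real.rpow_one]
      have h1 : h ^ e1 ≤ Tm ^ e1 := Real.rpow_le_rpow hh0 hhT he1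
      have h2 : Tm ^ e1 ≤ Tm ^ (2:ℝ) := Real.rpow_le_rpow_of_exponent_le hTm1 he12
      have h3 : 0 ≤ h ^ e2 := Real.rpow_nonneg (le_of_lt h0) _
      calc 2 * K * h = 2 * K * (h ^ e1 * h ^ e2) := by rw [← hpow]
        _ ≤ 2 * K * (Tm ^ (2:ℝ) * h ^ e2) := by
            apply mul_le_mul_of_nonneg_left _ (by linarith)
            exact mul_le_mul_of_nonneg_right (le_trans h1 h2) h3
        _ = C * h ^ e2 := by rw [hC_def]; ring
  constructor
  · intro hγ1
    exact le_trans hvar (hconv γ (1 - γ) (by linarith) (by ring) (le_of_lt hγ.1) (by linarith [hγ.2]))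
  · intro hγ1
    exact le_trans hvar (hconv (γ - 1) (2 - γ) (by linarith [hγ.2]) (by ring) (by linarith) (by linarith [hγ.2]))
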